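/- For all positive integers n and d, there exists a sequence of (n-1)·2^d elements in (ℤ/nℤ)^d with no zero-sum subsequence of length n. -/

import Mathlib

lemma multiset_sum_apply {ι M : Type*} [AddCommMonoid M] (s : Multiset (ι → M)) (i : ι) :
    s.sum i = (s.map fun x => x i).sum := by
  induction s using Multiset.induction with
  | empty => simp
  | cons a s ih => simp [ih]

theorem harborth_lower (n d : ℕ) (hn : 0 < n) (hd : 0 < d) :
    ∃ J : Multiset (Fin d → ZMod n), Multiset.card J = (n - 1) * 2 ^ d ∧
      ¬ ∃ S ≤ J, Multiset.card S = n ∧ S.sum = 0 := by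
  classical
  set f : (Fin d → Fin 2) → (Fin d → ZMod n) := fun v i => ((v i : ℕ) : ZMod n) with hf
  set T : Multiset (Fin d → ZMod n) :=
    ((Finset.univ : Finset (Fin d → Fin 2)).val.map f) with hT
  refine ⟨(n-1) • T, ?_, ?_⟩
  · simp [hT]
  · rintro ⟨S, hSJ, hcard, hsum⟩
    rcases eq_or_lt_of_le (show 1 ≤ n from hn) with h1 | h2
    · have hle := Multiset.card_le_card hSJ
      simp [hT, ← h1, hcard] at hle
    have hone : (1 : ℕ) < n := h2
    have h01 : (0 : ZMod n) ≠ 1 := by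
      haveI : Fact (1 < n) := ⟨hone⟩
      exact zero_ne_one
    -- every element of S is a 0-1 vector
    have hmem : ∀ x ∈ S, ∀ i, x i = 0 ∨ x i = 1 := by
      intro x hx i
      have hxJ : x ∈ (n-1) • T := Multiset.mem_of_le hSJ hx
      have hxT : x ∈ T := Multiset.mem_of_mem_nsmul hxJ
      rcases Multiset.mem_map.mp hxT with ⟨v, _, rfl⟩
      have hv : v i = 0 ∨ v i = 1 := by omega
      rcases hv with h | h <;> simp [hf, h]
    -- indicator function
    set g : ZMod n → ℕ := fun a => if a = 1 then 1 else 0 with hg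
    have hg0 : g 0 = 0 := if_neg h01
    have hg1 : g 1 = 1 := if_pos rfl
    have hgx : ∀ x ∈ S, ∀ i, ((g (x i) : ℕ) : ZMod n) = x i := by
      intro x hx i
      rcases hmem x hx i with h | h <;> rw [h] <;> simp [hg0, hg1]
    have hterm : ∀ i : Fin d, ∀ a ∈ S.map fun x => g (x i), a ≤ 1 := by
      intro i a ha
      rcases Multiset.mem_map.mp ha with ⟨x, hx, rfl⟩
      rcases hmem x hx i with h | h <;> rw [h] <;> simp [hg0, hg1]
    -- per-coordinate: all elements of S agree
    have hcoord : ∀ i : Fin d, ∃ c : Fin 2, ∀ x ∈ S, x i = ((c : ℕ) : ZMod n) := by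
      intro i
      obtain ⟨N, hN⟩ : ∃ N, (S.map fun x => g (x i)).sum = N := ⟨_, rfl⟩
      have hNle : N ≤ n := by
        have h := Multiset.sum_le_card_nsmul (S.map fun x => g (x i)) 1 (hterm i)
        rw [hN] at h
        simpa [hcard] using h
      have hNcast : ((N : ℕ) : ZMod n) = 0 := by
        have h1 : ((N : ℕ) : ZMod n) = (S.map fun x => ((g (x i) : ℕ) : ZMod n)).sum := by
          rw [← hN, Nat.cast_multiset_sum, Multiset.map_map]
          exact congrArg Multiset.sum (Multiset.map_congr rfl (fun _ _ => rfl))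
        rw [h1, Multiset.map_congr rfl (fun x hx => hgx x hx i), ← multiset_sum_apply, hsum]
        rfl
      have hdvd : n ∣ N := (ZMod.natCast_eq_zero_iff N n).mp hNcast
      have hN0n : N = 0 ∨ N = n := by
        clear hN
        rcases hdvd with ⟨k, hk⟩
        rcases Nat.lt_or_ge k 2 with hk2 | hk2
        · interval_cases k <;> omega
        · exfalso; nlinarith
      rcases hN0n with h | h
      · refine ⟨0, fun x hx => ?_⟩
        have hz : g (x i) = 0 :=
          Multiset.all_zero_of_le_zero_le_of_sum_eq_zero (fun y _ => Nat.zero_le y)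
            (hN.trans h) (g (x i)) (Multiset.mem_map_of_mem _ hx)
        rcases hmem x hx i with h' | h'
        · rw [h']; simp
        · rw [h', hg1] at hz; clear hN; omega
      · refine ⟨1, fun x hx => ?_⟩
        have hall : ∀ a ∈ S.map fun x => g (x i), a = 1 := by
          by_contra hcon
          push_neg at hcon
          rcases hcon with ⟨a, ha, hane⟩
          have ha01 : a ≤ 1 := hterm i a ha
          have ha0 : a = 0 := by clear hN; omega
          rcases Multiset.exists_cons_of_mem ha with ⟨t, ht⟩
          have hts : t.sum ≤ Multiset.card t * 1 := by
            have h2 := Multiset.sum_le_card_nsmul t 1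
              (fun b hb => hterm i b (by rw [ht]; exact Multiset.mem_cons_of_mem hb))
            simpa using h2
          have hsum' : a + t.sum = n := by
            rw [← h, ← hN, ht, Multiset.sum_cons]
          have hctT : Multiset.card t + 1 = n := by
            have h3 : Multiset.card (a ::ₘ t) = n := by
              rw [← ht, Multiset.card_map, hcard]
            rw [Multiset.card_cons] at h3
            exact h3
          clear hN ht ha
          omega
        have h1 : g (x i) = 1 := hall _ (Multiset.mem_map_of_mem _ hx)
        rcases hmem x hx i with h' | h'
        · rw [h', hg0] at h1; clear hN; omega
        · rw [h']; simp
    choose c hc using hcoord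
    have hSeq : ∀ x ∈ S, x = f c := fun x hx => funext fun i => hc i x hx
    have hSrep : S = Multiset.replicate n (f c) :=
      Multiset.eq_replicate.mpr ⟨hcard, hSeq⟩
    have hfinj : Function.Injective f := by
      intro u v huv
      funext i
      have hcast := congrFun huv i
      simp only [hf] at hcast
      have hu : (u i : ℕ) < n := lt_of_lt_of_le (u i).2 hone
      have hv : (v i : ℕ) < n := lt_of_lt_of_le (v i).2 hone
      have hval := congrArg ZMod.val hcast
      rw [ZMod.val_cast_of_lt hu, ZMod.val_cast_of_lt hv] at hval
      exact Fin.ext hval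
    have hcT : Multiset.count (f c) T = 1 := by
      apply Multiset.count_eq_one_of_mem
      · exact Multiset.Nodup.map hfinj Finset.univ.nodup
      · exact Multiset.mem_map_of_mem f (Finset.mem_univ c)
    have hcount : Multiset.count (f c) S ≤ Multiset.count (f c) ((n-1) • T) :=
      Multiset.count_le_of_le _ hSJ
    rw [hSrep, Multiset.count_replicate_self, Multiset.count_nsmul, hcT, mul_one] at hcount
    omega
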